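/- arXiv:2209.14254 — 9 statements merged into one kernel-verified Lean document; each statement's English description precedes it below -/
import Mathlib

section
/- Let p and q1 be real numbers with 0 < p < 1/2 and 0 < q1 ≤ 1, and set r = 1 − q1 − p + 2·q1·p. Suppose π : ℕ → ℝ satisfies: (i) π(1) = p·π(0); (ii) π(Δ+1) = r·π(Δ) for every Δ ≥ 1; and (iii) ∑'_{Δ∈ℕ} π(Δ) = 1 (in the sense of tsum). Then π(0) = (p + q1 − 2·q1·p)/(1 − (1−q1)·(1−2p)), and for every Δ ≥ 1, π(Δ) = r^(Δ−1)·(p² + q1·p − 2·q1·p²)/(1 − (1−q1)·(1−2p)). -/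
/-- Lemma 1: stationary distribution of the AoII under the strong preemptive policy. -/
theorem strong_preemptive_stationary_distribution
    (p q1 : ℝ) (hp0 : 0 < p) (hp2 : p < 1 / 2) (hq10 : 0 < q1) (hq11 : q1 ≤ 1)
    (π : ℕ → ℝ)
    (h1 : π 1 = p * π 0)
    (h2 : ∀ Δ : ℕ, 1 ≤ Δ → π (Δ + 1) = (1 - q1 - p + 2 * q1 * p) * π Δ)
    (h3 : ∑' Δ : ℕ, π Δ = 1) :
    π 0 = (p + q1 - 2 * q1 * p) / (1 - (1 - q1) * (1 - 2 * p)) ∧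
      ∀ Δ : ℕ, 1 ≤ Δ →
        π Δ = (1 - q1 - p + 2 * q1 * p) ^ (Δ - 1) * (p ^ 2 + q1 * p - 2 * q1 * p ^ 2) /
          (1 - (1 - q1) * (1 - 2 * p)) := by
  set r : ℝ := 1 - q1 - p + 2 * q1 * p with hr
  have hr0 : 0 < r := by nlinarith
  have hr1 : r < 1 := by nlinarith
  have hone : 0 < 1 - r := by linarith
  have hD : 0 < 1 - (1 - q1) * (1 - 2 * p) := by nlinarith
  have hDr : 1 - (1 - q1) * (1 - 2 * p) = (1 - r) + p := by ring
  -- explicit form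
  have key : ∀ n : ℕ, π (n + 1) = r ^ n * (p * π 0) := by
    intro n
    induction n with
    | zero => simpa using h1
    | succ k ih =>
      rw [h2 (k + 1) (by omega), ih]; ring
  have hsum1 : Summable (fun n : ℕ => π (n + 1)) := by
    have : Summable (fun n : ℕ => r ^ n * (p * π 0)) :=
      (summable_geometric_of_lt_one hr0.le hr1).mul_right _
    exact this.congr fun n => (key n).symm
  have hsum : Summable π := (summable_nat_add_iff 1).mp hsum1
  have ht : ∑' n : ℕ, π (n + 1) = (1 - r)⁻¹ * (p * π 0) := by
    calc ∑' n : ℕ, π (n + 1) = ∑' n : ℕ, r ^ n * (p * π 0) := by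
          exact tsum_congr key
      _ = (∑' n : ℕ, r ^ n) * (p * π 0) := tsum_mul_right
      _ = (1 - r)⁻¹ * (p * π 0) := by rw [tsum_geometric_of_lt_one hr0.le hr1]
  have heq : π 0 + (1 - r)⁻¹ * (p * π 0) = 1 := by
    rw [← ht, ← Summable.tsum_eq_zero_add hsum, h3]
  have hpi0 : π 0 = (p + q1 - 2 * q1 * p) / (1 - (1 - q1) * (1 - 2 * p)) := by
    rw [hDr]
    have h1r : (1 : ℝ) - r = p + q1 - 2 * q1 * p := by rw [hr]; ring
    rw [← h1r]
    field_simp at heq ⊢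
    nlinarith [heq]
  refine ⟨hpi0, fun Δ hΔ => ?_⟩
  obtain ⟨n, rfl⟩ : ∃ n, Δ = n + 1 := ⟨Δ - 1, by omega⟩
  rw [key n, hpi0]
  have : (n + 1) - 1 = n := by omega
  rw [this]
  field_simp
end

section
/- Let p and q1 be real numbers with 0 < p < 1/2 and 0 < q1 ≤ 1, set r = 1 − q1 − p + 2·q1·p, and define π : ℕ → ℝ by π(0) = (p + q1 − 2·q1·p)/(1 − (1−q1)·(1−2p)) and π(Δ) = r^(Δ−1)·(p² + q1·p − 2·q1·p²)/(1 − (1−q1)·(1−2p)) for Δ ≥ 1. Then for all real numbers α ≥ 0 and β ≥ 0, ∑'_{Δ∈ℕ} (α·Δ + β)·π(Δ) = α·p/((p + q1 − 2·q1·p)·(q1 + 2·p − 2·q1·p)) + β. -/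
/-- Corollary 1: expected AoII of the strong preemptive policy under a linear time penalty. -/
theorem strong_preemptive_expected_aoii_linear
    (p q1 : ℝ) (hp0 : 0 < p) (hp2 : p < 1 / 2) (hq10 : 0 < q1) (hq11 : q1 ≤ 1)
    (π : ℕ → ℝ)
    (hπ0 : π 0 = (p + q1 - 2 * q1 * p) / (1 - (1 - q1) * (1 - 2 * p)))
    (hπ : ∀ Δ : ℕ, 1 ≤ Δ →
      π Δ = (1 - q1 - p + 2 * q1 * p) ^ (Δ - 1) * (p ^ 2 + q1 * p - 2 * q1 * p ^ 2) /
        (1 - (1 - q1) * (1 - 2 * p))) :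
    ∀ α β : ℝ, 0 ≤ α → 0 ≤ β →
      ∑' Δ : ℕ, (α * (Δ : ℝ) + β) * π Δ =
        α * p / ((p + q1 - 2 * q1 * p) * (q1 + 2 * p - 2 * q1 * p)) + β := by
  intro α β hα hβ
  set r : ℝ := 1 - q1 - p + 2 * q1 * p with hr
  set A : ℝ := p + q1 - 2 * q1 * p with hA
  set D : ℝ := 1 - (1 - q1) * (1 - 2 * p) with hD
  set c : ℝ := p ^ 2 + q1 * p - 2 * q1 * p ^ 2 with hc
  have hA0 : 0 < A := by
    have : A = q1 * (1 - p) + p * (1 - q1) := by ring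
    nlinarith
  have hr0 : 0 ≤ r := by nlinarith
  have hr1 : r < 1 := by
    have : 1 - r = A := by ring
    linarith
  have hD0 : 0 < D := by
    have : D = q1 + 2 * p - 2 * q1 * p := by ring
    nlinarith
  have h1r : 1 - r = A := by ring
  -- the tail sum
  have hhs : HasSum (fun n : ℕ => (α * ((n : ℝ) + 1) + β) * (r ^ n * c / D))
      ((α * c / D) * (r / (1 - r) ^ 2) + ((α + β) * c / D) * (1 - r)⁻¹) := by
    have hgeo : HasSum (fun n : ℕ => r ^ n) (1 - r)⁻¹ :=
      hasSum_geometric_of_lt_one hr0 hr1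
    have hmul : HasSum (fun n : ℕ => (n : ℝ) * r ^ n) (r / (1 - r) ^ 2) := by
      have : ‖r‖ < 1 := by rw [Real.norm_eq_abs, abs_of_nonneg hr0]; exact hr1
      exact hasSum_coe_mul_geometric_of_norm_lt_one this
    have := (hmul.mul_left (α * c / D)).add (hgeo.mul_left ((α + β) * c / D))
    convert this using 2 with n
    · rfl
    ring
  have hsum1 : Summable (fun n : ℕ => (α * ((n : ℝ) + 1) + β) * (r ^ n * c / D)) :=
    hhs.summable
  have hf : ∀ n : ℕ, (α * ((n + 1 : ℕ) : ℝ) + β) * π (n + 1)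
      = (α * ((n : ℝ) + 1) + β) * (r ^ n * c / D) := by
    intro n
    rw [hπ (n + 1) (Nat.le_add_left 1 n)]
    push_cast
    simp
  have hsumf : Summable (fun Δ : ℕ => (α * (Δ : ℝ) + β) * π Δ) := by
    rw [← summable_nat_add_iff 1]
    exact hsum1.congr fun n => (hf n).symm
  rw [Summable.tsum_eq_zero_add hsumf]
  have htail : ∑' n : ℕ, (α * ((n + 1 : ℕ) : ℝ) + β) * π (n + 1)
      = (α * c / D) * (r / (1 - r) ^ 2) + ((α + β) * c / D) * (1 - r)⁻¹ := by
    rw [tsum_congr hf]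
    exact hhs.tsum_eq
  rw [htail, hπ0]
  have hcA : c = p * A := by rw [hc, hA]; ring
  have hDA : D = A + p := by rw [hD, hA]; ring
  have hDq : D = q1 + 2 * p - 2 * q1 * p := by rw [hD]; ring
  rw [h1r, hcA, hDA, ← hDq, hDA]
  have hA0' : A ≠ 0 := ne_of_gt hA0
  have hD0' : (A + p) ≠ 0 := by rw [← hDA]; exact ne_of_gt hD0
  have hrA : r = 1 - A := by rw [hr, hA]; ring
  field_simp
  rw [hrA]
  ring
end

section
/- Let tmax be a natural number with tmax ≥ 2, let p be a real number with 0 < p < 1/2, and let q : ℕ → ℝ satisfy 0 ≤ q(t) ≤ 1 for 1 ≤ t ≤ tmax with q(1) > 0. For 1 ≤ t ≤ tmax set 𝒫(t) = (1 − q(t))·(1 − p). Suppose the real numbers π0, Π and the function Π' : ℕ → ℝ satisfy: (i) Π − p·π0 = q(1)·p·Π + ∑_{t=1}^{tmax−1} q(t+1)·p·Π'(t); (ii) Π'(1) = 𝒫(1)·Π; (iii) Π'(t) = 𝒫(t)·Π'(t−1) for 2 ≤ t ≤ tmax−1; and (iv) π0 + Π + ∑_{t=1}^{tmax−1} Π'(t)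 = 1. Then Π'(t) = (∏_{l=1}^{t} 𝒫(l))·Π for every 1 ≤ t ≤ tmax−1, and Π = 1 / ( 1/p − q(1) − ∑_{t=1}^{tmax−1} q(t+1)·∏_{l=1}^{t} 𝒫(l) + 1 + ∑_{t=1}^{tmax−1} ∏_{l=1}^{t} 𝒫(l) ). -/
/-- Lemma 2: aggregated stationary quantities of the weak preemptive policy. -/
theorem weak_preemptive_stationary_aggregates
    (tmax : ℕ) (htmax : 2 ≤ tmax) (p : ℝ) (hp0 : 0 < p) (hp2 : p < 1 / 2)
    (q : ℕ → ℝ) (hq : ∀ t : ℕ, 1 ≤ t → t ≤ tmax → 0 ≤ q t ∧ q t ≤ 1) (hq1 : 0 < q 1)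
    (π0 Pbig : ℝ) (Pbig' : ℕ → ℝ)
    (h1 : Pbig - p * π0 =
      q 1 * p * Pbig + ∑ t ∈ Finset.Icc 1 (tmax - 1), q (t + 1) * p * Pbig' t)
    (h2 : Pbig' 1 = (1 - q 1) * (1 - p) * Pbig)
    (h3 : ∀ t : ℕ, 2 ≤ t → t ≤ tmax - 1 → Pbig' t = (1 - q t) * (1 - p) * Pbig' (t - 1))
    (h4 : π0 + Pbig + ∑ t ∈ Finset.Icc 1 (tmax - 1), Pbig' t = 1) :
    (∀ t : ℕ, 1 ≤ t → t ≤ tmax - 1 →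
      Pbig' t = (∏ l ∈ Finset.Icc 1 t, (1 - q l) * (1 - p)) * Pbig) ∧
    Pbig = 1 /
      (1 / p - q 1 -
        (∑ t ∈ Finset.Icc 1 (tmax - 1), q (t + 1) * ∏ l ∈ Finset.Icc 1 t, (1 - q l) * (1 - p))
        + 1 + ∑ t ∈ Finset.Icc 1 (tmax - 1), ∏ l ∈ Finset.Icc 1 t, (1 - q l) * (1 - p)) := by
  have claim1 : ∀ t : ℕ, 1 ≤ t → t ≤ tmax - 1 →
      Pbig' t = (∏ l ∈ Finset.Icc 1 t, (1 - q l) * (1 - p)) * Pbig := by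
    intro t
    induction t with
    | zero => intro h; omega
    | succ n ih =>
      intro _ hle
      rcases Nat.eq_zero_or_pos n with hn | hn
      · subst hn
        simp [h2, Finset.Icc_self]
      · have h3' := h3 (n + 1) (by omega) hle
        simp only [Nat.add_sub_cancel] at h3'
        rw [h3', ih hn (by omega),
          Finset.prod_Icc_succ_top (by omega : 1 ≤ n + 1)]
        ring
  refine ⟨claim1, ?_⟩
  set A := ∑ t ∈ Finset.Icc 1 (tmax - 1), q (t + 1) * ∏ l ∈ Finset.Icc 1 t, (1 - q l) * (1 - p)
    with hA
  set B := ∑ t ∈ Finset.Icc 1 (tmax - 1), ∏ l ∈ Finset.Icc 1 t, (1 - q l) * (1 - p) with hB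
  have h1' : Pbig - p * π0 = q 1 * p * Pbig + p * A * Pbig := by
    rw [h1]
    congr 1
    rw [hA, Finset.mul_sum, Finset.sum_mul]
    refine Finset.sum_congr rfl fun t ht => ?_
    rw [Finset.mem_Icc] at ht
    rw [claim1 t ht.1 ht.2]
    ring
  have h4' : π0 + Pbig + B * Pbig = 1 := by
    rw [← h4]
    congr 1
    rw [hB, Finset.sum_mul]
    refine Finset.sum_congr rfl fun t ht => ?_
    rw [Finset.mem_Icc] at ht
    exact (claim1 t ht.1 ht.2).symm
  have hp : p ≠ 0 := ne_of_gt hp0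
  have hD : Pbig * (1 / p - q 1 - A + 1 + B) = 1 := by
    field_simp
    linear_combination h1' + p * h4'
  have hDne : (1 / p - q 1 - A + 1 + B) ≠ 0 := by
    intro h
    rw [h, mul_zero] at hD
    exact zero_ne_one hD
  rw [eq_div_iff hDne]
  exact hD
end

section
/- Let tmax be a natural number with tmax ≥ 2, let p be a real number with 0 < p < 1/2, and let q : ℕ → ℝ satisfy 0 ≤ q(t) ≤ 1 for 1 ≤ t ≤ tmax. For 1 ≤ t ≤ tmax set 𝒫(t) = (1 − q(t))·(1 − p). Suppose the real numbers Σ, Π and the functions Σ', Π' : ℕ → ℝ satisfy: (i) Σ'(1) − Π'(1) = 𝒫(1)·Σ; (ii) Σ'(t) − Π'(t) = 𝒫(t)·Σ'(t−1) for 2 ≤ t ≤ tmax−1; and (iii) Σ − Π = q(1)·p·Σ + ∑_{t=1}^{tmax−1} q(t+1)·p·Σ'(t). Then Σ = ( Π + ∑_{t=1}^{tmax−1} q(t+1)·p·( ∑_{i=1}^{t} (∏_{j=i+1}^{t} 𝒫(j))·Π'(i) ) ) / ( 1 − q(1)·p − ∑_{t=1}^{tmax−1} q(t+1)·p·∏_{l=1}^{t}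 𝒫(l) ), and Σ'(t) = (∏_{l=1}^{t} 𝒫(l))·Σ + ∑_{i=1}^{t} (∏_{j=i+1}^{t} 𝒫(j))·Π'(i) for every 1 ≤ t ≤ tmax−1. -/
/-- Theorem 1: closed-form first moments for the weak preemptive policy. -/
theorem weak_preemptive_first_moments
    (tmax : ℕ) (htmax : 2 ≤ tmax) (p : ℝ) (hp0 : 0 < p) (hp2 : p < 1 / 2)
    (q : ℕ → ℝ) (hq : ∀ t : ℕ, 1 ≤ t → t ≤ tmax → 0 ≤ q t ∧ q t ≤ 1)
    (Sbig Pbig : ℝ) (Sbig' Pbig' : ℕ → ℝ)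
    (h1 : Sbig' 1 - Pbig' 1 = (1 - q 1) * (1 - p) * Sbig)
    (h2 : ∀ t : ℕ, 2 ≤ t → t ≤ tmax - 1 →
      Sbig' t - Pbig' t = (1 - q t) * (1 - p) * Sbig' (t - 1))
    (h3 : Sbig - Pbig =
      q 1 * p * Sbig + ∑ t ∈ Finset.Icc 1 (tmax - 1), q (t + 1) * p * Sbig' t) :
    Sbig =
      (Pbig + ∑ t ∈ Finset.Icc 1 (tmax - 1), q (t + 1) * p *
          (∑ i ∈ Finset.Icc 1 t, (∏ j ∈ Finset.Icc (i + 1) t, (1 - q j) * (1 - p)) * Pbig' i)) /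
      (1 - q 1 * p - ∑ t ∈ Finset.Icc 1 (tmax - 1),
          q (t + 1) * p * ∏ l ∈ Finset.Icc 1 t, (1 - q l) * (1 - p)) ∧
    ∀ t : ℕ, 1 ≤ t → t ≤ tmax - 1 →
      Sbig' t = (∏ l ∈ Finset.Icc 1 t, (1 - q l) * (1 - p)) * Sbig +
        ∑ i ∈ Finset.Icc 1 t, (∏ j ∈ Finset.Icc (i + 1) t, (1 - q j) * (1 - p)) * Pbig' i := by
  have part2 : ∀ t : ℕ, 1 ≤ t → t ≤ tmax - 1 →
      Sbig' t = (∏ l ∈ Finset.Icc 1 t, (1 - q l) * (1 - p)) * Sbig +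
        ∑ i ∈ Finset.Icc 1 t, (∏ j ∈ Finset.Icc (i + 1) t, (1 - q j) * (1 - p)) * Pbig' i := by
    intro t ht
    induction t, ht using Nat.le_induction with
    | base =>
      intro _
      have he : Finset.Icc 2 1 = (∅ : Finset ℕ) := by decide
      simp [he]
      linarith [h1]
    | succ t ht ih =>
      intro hle
      have ihh := ih (by omega)
      have h2' := h2 (t + 1) (by omega) (by omega)
      simp only [Nat.add_sub_cancel] at h2'
      rw [Finset.prod_Icc_succ_top (by omega : 1 ≤ t + 1),
          Finset.sum_Icc_succ_top (by omega : 1 ≤ t + 1)]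
      have hemp : Finset.Icc (t + 1 + 1) (t + 1) = (∅ : Finset ℕ) :=
        Finset.Icc_eq_empty (by omega)
      rw [hemp]
      have hsum : ∑ i ∈ Finset.Icc 1 t,
          (∏ j ∈ Finset.Icc (i + 1) (t + 1), (1 - q j) * (1 - p)) * Pbig' i
          = ((1 - q (t + 1)) * (1 - p)) * ∑ i ∈ Finset.Icc 1 t,
            (∏ j ∈ Finset.Icc (i + 1) t, (1 - q j) * (1 - p)) * Pbig' i := by
        rw [Finset.mul_sum]
        refine Finset.sum_congr rfl ?_
        intro i hi
        rw [Finset.mem_Icc] at hi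
        rw [Finset.prod_Icc_succ_top (by omega : i + 1 ≤ t + 1)]
        ring
      rw [hsum, Finset.prod_empty]
      have hS : Sbig' (t + 1) = (1 - q (t + 1)) * (1 - p) * Sbig' t + Pbig' (t + 1) := by
        linarith [h2']
      rw [hS, ihh]
      ring
  refine ⟨?_, part2⟩
  -- abbreviations
  set m := tmax - 1 with hm
  have hm1 : 1 ≤ m := by omega
  -- geometric sum
  have geo : ∀ n : ℕ, p * ∑ i ∈ Finset.range n, (1 - p) ^ i = 1 - (1 - p) ^ n := by
    intro n
    induction n with
    | zero => simp
    | succ n ih => rw [Finset.sum_range_succ, mul_add, ih, pow_succ]; ring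
  -- bound on products
  have hprod : ∀ t : ℕ, t ≤ m →
      (0 ≤ ∏ l ∈ Finset.Icc 1 t, (1 - q l) * (1 - p)) ∧
      (∏ l ∈ Finset.Icc 1 t, (1 - q l) * (1 - p)) ≤ (1 - p) ^ t := by
    intro t htm
    have hnn : ∀ l ∈ Finset.Icc 1 t, 0 ≤ (1 - q l) * (1 - p) := by
      intro l hl
      rw [Finset.mem_Icc] at hl
      have := hq l hl.1 (by omega)
      nlinarith
    constructor
    · exact Finset.prod_nonneg hnn
    · calc (∏ l ∈ Finset.Icc 1 t, (1 - q l) * (1 - p))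
          ≤ ∏ l ∈ Finset.Icc 1 t, (1 - p) := by
            refine Finset.prod_le_prod hnn ?_
            intro l hl
            rw [Finset.mem_Icc] at hl
            have := hq l hl.1 (by omega)
            nlinarith
        _ = (1 - p) ^ t := by
            rw [Finset.prod_const, Nat.card_Icc]
            norm_num
  -- denominator positivity
  have hDpos : 0 < 1 - q 1 * p - ∑ t ∈ Finset.Icc 1 m,
      q (t + 1) * p * ∏ l ∈ Finset.Icc 1 t, (1 - q l) * (1 - p) := by
    have hq1 := hq 1 le_rfl (by omega)
    have hterm : ∀ t ∈ Finset.Icc 1 m,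
        q (t + 1) * p * (∏ l ∈ Finset.Icc 1 t, (1 - q l) * (1 - p)) ≤ p * (1 - p) ^ t := by
      intro t ht
      rw [Finset.mem_Icc] at ht
      have hqt := hq (t + 1) (by omega) (by omega)
      have hp := hprod t ht.2
      have h1' : q (t + 1) * p * (∏ l ∈ Finset.Icc 1 t, (1 - q l) * (1 - p))
          ≤ p * (∏ l ∈ Finset.Icc 1 t, (1 - q l) * (1 - p)) := by
        nlinarith [mul_nonneg (mul_nonneg (by linarith [hqt.2] : (0:ℝ) ≤ 1 - q (t + 1)) hp0.le) hp.1]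
      have h2' : p * (∏ l ∈ Finset.Icc 1 t, (1 - q l) * (1 - p)) ≤ p * (1 - p) ^ t :=
        mul_le_mul_of_nonneg_left hp.2 hp0.le
      linarith
    have hsumle : ∑ t ∈ Finset.Icc 1 m,
        q (t + 1) * p * (∏ l ∈ Finset.Icc 1 t, (1 - q l) * (1 - p))
        ≤ ∑ t ∈ Finset.Icc 1 m, p * (1 - p) ^ t := Finset.sum_le_sum hterm
    have hsplit : p * (1 - p) ^ 0 + ∑ t ∈ Finset.Icc 1 m, p * (1 - p) ^ t
        = ∑ t ∈ Finset.range (m + 1), p * (1 - p) ^ t := by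
      rw [Finset.sum_range_succ' (fun t => p * (1 - p) ^ t) m]
      rw [show Finset.Icc 1 m = Finset.Ico 1 (m + 1) by rw [Finset.Ico_add_one_right_eq_Icc],
        Finset.sum_Ico_eq_sum_range]
      simp [add_comm]
    have hgeo : ∑ t ∈ Finset.range (m + 1), p * (1 - p) ^ t = 1 - (1 - p) ^ (m + 1) := by
      rw [← geo (m + 1), Finset.mul_sum]
    have hpow : 0 < (1 - p) ^ (m + 1) := pow_pos (by linarith) _
    have hq1p : q 1 * p ≤ p * (1 - p) ^ 0 := by simp; nlinarith [hq1.1, hq1.2]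
    nlinarith [hsumle, hq1p]
  rw [eq_div_iff (ne_of_gt hDpos)]
  -- rewrite h3 using part2
  have h3' : Sbig - Pbig = q 1 * p * Sbig +
      ((∑ t ∈ Finset.Icc 1 m, q (t + 1) * p * ∏ l ∈ Finset.Icc 1 t, (1 - q l) * (1 - p)) * Sbig
       + ∑ t ∈ Finset.Icc 1 m, q (t + 1) * p *
          (∑ i ∈ Finset.Icc 1 t, (∏ j ∈ Finset.Icc (i + 1) t, (1 - q j) * (1 - p)) * Pbig' i)) := by
    rw [h3]
    rw [Finset.sum_mul, ← Finset.sum_add_distrib]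
    congr 1
    refine Finset.sum_congr rfl ?_
    intro t ht
    rw [Finset.mem_Icc] at ht
    rw [part2 t ht.1 ht.2]
    ring
  linear_combination h3'
end

section
/- Let S be a finite type. Let P_A, P_B : S → S → ℝ, let π_B : S → ℝ satisfy π_B(s) ≥ 0 for all s, ∑_{s∈S} π_B(s) = 1, and ∑_{s∈S} π_B(s)·P_B(s,s') = π_B(s') for every s' ∈ S. Let C_A, C_B, V_A, V_B : S → ℝ and θ_A, θ_B ∈ ℝ satisfy the Bellman equations V_A(s) + θ_A = C_A(s) + ∑_{s'} P_A(s,s')·V_A(s') and V_B(s) + θ_B = C_B(s) + ∑_{s'} P_B(s,s')·V_B(s') for every s ∈ S. Assume the improvement inequality C_A(s) + ∑_{s'} P_A(s,s')·V_A(s') ≤ C_B(s) + ∑_{s'} P_B(s,s')·V_A(s') holds for every s ∈ S. Then θ_A ≤ θ_B. -/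
/-- Theorem 3 (policy improvement theorem) for a finite-state MDP. -/
theorem policy_improvement_theorem
    {S : Type*} [Fintype S]
    (PA PB : S → S → ℝ) (πB : S → ℝ)
    (hπBnonneg : ∀ s : S, 0 ≤ πB s)
    (hπBnorm : ∑ s : S, πB s = 1)
    (hπBstat : ∀ s' : S, ∑ s : S, πB s * PB s s' = πB s')
    (CA CB VA VB : S → ℝ) (θA θB : ℝ)
    (hbellA : ∀ s : S, VA s + θA = CA s + ∑ s' : S, PA s s' * VA s')
    (hbellB : ∀ s : S, VB s + θB = CB s + ∑ s' : S, PB s s' * VB s')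
    (himpr : ∀ s : S,
      CA s + ∑ s' : S, PA s s' * VA s' ≤ CB s + ∑ s' : S, PB s s' * VA s') :
    θA ≤ θB := by
  have key : ∀ (V : S → ℝ),
      ∑ s : S, πB s * ∑ s' : S, PB s s' * V s' = ∑ s' : S, πB s' * V s' := by
    intro V
    calc ∑ s : S, πB s * ∑ s' : S, PB s s' * V s'
        = ∑ s : S, ∑ s' : S, πB s * PB s s' * V s' := by
          simp [Finset.mul_sum, mul_assoc]
      _ = ∑ s' : S, (∑ s : S, πB s * PB s s') * V s' := by
          rw [Finset.sum_comm]; simp [Finset.sum_mul]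
      _ = ∑ s' : S, πB s' * V s' := by simp [hπBstat]
  -- θB = ∑ πB CB
  have hB : θB = ∑ s : S, πB s * CB s := by
    have := congrArg (fun f => ∑ s : S, πB s * f s)
      (funext fun s => hbellB s)
    simp only [mul_add, Finset.sum_add_distrib, key, ← Finset.sum_mul, hπBnorm, one_mul] at this
    linarith [this]
  have hA : ∑ s : S, πB s * (VA s + θA) ≤
      ∑ s : S, πB s * (CB s + ∑ s' : S, PB s s' * VA s') := by
    apply Finset.sum_le_sum
    intro s _
    have := (hbellA s).le.trans (himpr s)
    exact mul_le_mul_of_nonneg_left this (hπBnonneg s)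
  simp only [mul_add, Finset.sum_add_distrib, key, ← Finset.sum_mul, hπBnorm,
    one_mul] at hA
  linarith [hA, hB]
end

section
/- Let U be a finite type, let γ be a real number with 0 < γ < 1, and let f : ℕ → ℝ be nondecreasing. For each action a ∈ {0,1}, let R_a, S_a : U → U → ℝ be nonnegative with ∑_{u'∈U} (R_a(u,u') + S_a(u,u')) = 1 for every u ∈ U, and let R⁰_a, S⁰_a : U → U → ℝ be nonnegative with ∑_{u'∈U} (R⁰_a(u,u') + S⁰_a(u,u')) = 1 for every u ∈ U. Define the value-iteration sequence V_ν : ℕ × U → ℝ by V_0 ≡ 0, and for all ν: V_{ν+1}(Δ,u) = min_{a∈{0,1}} { f(Δ) + γ·∑_{u'∈U} [ R_a(u,u')·V_ν(Δ+1,u') + S_a(u,u')·V_ν(0,u') ] } for Δ ≥ 1, and V_{ν+1}(0,u) = min_{a∈{0,1}} { f(0) + γ·∑_{u'∈U} [ R⁰_a(u,u')·V_ν(1,u') + S⁰_a(u,u')·V_ν(0,u') ] }. Then for every ν, every u ∈ U, and all natural numbers Δ1 ≥ Δ2 ≥ 1, one has V_ν(Δ1,u) ≥ V_ν(Δ2,u).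 -/
/-- Lemma 4: every iterate of discounted value iteration is nondecreasing in the AoII value. -/
theorem value_iteration_monotone_in_aoii
    {U : Type*} [Fintype U] (γ : ℝ) (hγ0 : 0 < γ) (hγ1 : γ < 1)
    (f : ℕ → ℝ) (hf : Monotone f)
    (R S R0 S0 : Fin 2 → U → U → ℝ)
    (hRnonneg : ∀ a u u', 0 ≤ R a u u') (hSnonneg : ∀ a u u', 0 ≤ S a u u')
    (hRS : ∀ a u, ∑ u' : U, (R a u u' + S a u u') = 1)
    (hR0nonneg : ∀ a u u', 0 ≤ R0 a u u') (hS0nonneg : ∀ a u u', 0 ≤ S0 a u u')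
    (hRS0 : ∀ a u, ∑ u' : U, (R0 a u u' + S0 a u u') = 1)
    (V : ℕ → ℕ → U → ℝ)
    (hV0 : ∀ Δ u, V 0 Δ u = 0)
    (hVpos : ∀ ν Δ u, 1 ≤ Δ → V (ν + 1) Δ u =
      min (f Δ + γ * ∑ u' : U, (R 0 u u' * V ν (Δ + 1) u' + S 0 u u' * V ν 0 u'))
          (f Δ + γ * ∑ u' : U, (R 1 u u' * V ν (Δ + 1) u' + S 1 u u' * V ν 0 u')))
    (hVzero : ∀ ν u, V (ν + 1) 0 u =
      min (f 0 + γ * ∑ u' : U, (R0 0 u u' * V ν 1 u' + S0 0 u u' * V ν 0 u'))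
          (f 0 + γ * ∑ u' : U, (R0 1 u u' * V ν 1 u' + S0 1 u u' * V ν 0 u'))) :
    ∀ (ν : ℕ) (u : U) (Δ1 Δ2 : ℕ), 1 ≤ Δ2 → Δ2 ≤ Δ1 → V ν Δ2 u ≤ V ν Δ1 u := by
  intro ν
  induction ν with
  | zero => intro u Δ1 Δ2 _ _; simp [hV0]
  | succ ν ih =>
    intro u Δ1 Δ2 h2 h12
    rw [hVpos ν Δ2 u h2, hVpos ν Δ1 u (h2.trans h12)]
    have key : ∀ a : Fin 2,
        f Δ2 + γ * ∑ u' : U, (R a u u' * V ν (Δ2 + 1) u' + S a u u' * V ν 0 u') ≤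
        f Δ1 + γ * ∑ u' : U, (R a u u' * V ν (Δ1 + 1) u' + S a u u' * V ν 0 u') := by
      intro a
      have hsum : ∑ u' : U, (R a u u' * V ν (Δ2 + 1) u' + S a u u' * V ν 0 u') ≤
          ∑ u' : U, (R a u u' * V ν (Δ1 + 1) u' + S a u u' * V ν 0 u') := by
        apply Finset.sum_le_sum
        intro u' _
        have := ih u' (Δ1 + 1) (Δ2 + 1) (by omega) (by omega)
        nlinarith [hRnonneg a u u']
      have := hf h12
      nlinarith
    exact min_le_min (key 0) (key 1)
end

section
/- Let p, p_s, θ be real numbers with 0 < p < 1/2 and 0 < p_s < 1, and let f : ℕ → ℝ be nondecreasing. Set c = (1 − p_s)·(1 − p) + p_s·p and c' = (1 − p_s)·p + p_s·(1 − p). Define the sequence of functions V_ν : ℕ → ℝ by V_0 ≡ 0, and for all ν: V_{ν+1}(0) = f(0) − θ + (1 − p)·V_ν(0) + p·V_ν(1), and V_{ν+1}(Δ) = f(Δ) − θ + c·V_ν(Δ+1) + c'·V_ν(0) for every Δ ≥ 1. Then for every ν, the function V_ν is nondecreasing on ℕ, i.e., V_ν(Δ) ≤ V_ν(Δ+1)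 for all Δ ∈ ℕ. -/
/-- Monotonicity of the iterates of the policy-evaluation recursion for the strong
preemptive policy under Geometric delay (property 2 of Lemma 8 in the appendix). -/
theorem geometric_policy_evaluation_iterates_monotone
    (p ps θ : ℝ) (hp0 : 0 < p) (hp2 : p < 1 / 2) (hps0 : 0 < ps) (hps1 : ps < 1)
    (f : ℕ → ℝ) (hf : Monotone f)
    (V : ℕ → ℕ → ℝ)
    (hV0 : ∀ Δ, V 0 Δ = 0)
    (hVz : ∀ ν, V (ν + 1) 0 = f 0 - θ + (1 - p) * V ν 0 + p * V ν 1)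
    (hVp : ∀ ν Δ, 1 ≤ Δ → V (ν + 1) Δ = f Δ - θ +
      ((1 - ps) * (1 - p) + ps * p) * V ν (Δ + 1) +
      ((1 - ps) * p + ps * (1 - p)) * V ν 0) :
    ∀ ν Δ, V ν Δ ≤ V ν (Δ + 1) := by
  intro ν
  induction ν with
  | zero => intro Δ; simp [hV0]
  | succ ν ih =>
    have hc : (0:ℝ) ≤ (1 - ps) * (1 - p) + ps * p := by nlinarith
    have hkey : (0:ℝ) ≤ (1 - ps) * (1 - 2 * p) := by nlinarith
    intro Δ
    cases Δ with
    | zero =>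
      rw [hVz ν, hVp ν 1 (by norm_num)]
      have h1 := ih 0
      have h2 := ih 1
      have hf1 := hf (by norm_num : (0:ℕ) ≤ 1)
      nlinarith [mul_nonneg hp0.le (by linarith : (0:ℝ) ≤ V ν 2 - V ν 1), mul_nonneg hkey (by linarith : (0:ℝ) ≤ V ν 2 - V ν 0)]
    | succ Δ =>
      rw [hVp ν (Δ + 1) (by omega), hVp ν (Δ + 2) (by omega)]
      have h1 := ih (Δ + 2)
      have hf1 := hf (by omega : Δ + 1 ≤ Δ + 2)
      nlinarith [mul_nonneg hc (by linarith : (0:ℝ) ≤ V ν (Δ + 3) - V ν (Δ + 2))]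
end

section
/- Let p, q1, α, β, θ be real numbers with 0 < p < 1/2 and 0 < q1 ≤ 1. Set c = (1 − q1)·(1 − p) + q1·p and c' = (1 − q1)·p + q1·(1 − p). Define the sequence of functions V_ν : ℕ → ℝ by V_0 ≡ 0, and for all ν: V_{ν+1}(0) = β − θ + (1 − p)·V_ν(0) + p·V_ν(1), and V_{ν+1}(Δ) = α·Δ + β − θ + c·V_ν(Δ+1) + c'·V_ν(0) for every Δ ≥ 1. Then for every ν and all natural numbers Δ1, Δ2 ≥ 1, one has V_ν(Δ1+1) − V_ν(Δ1) = V_ν(Δ2+1) − V_ν(Δ2). -/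
/-- Constant first differences of the iterates of the policy-evaluation recursion
for the threshold preemptive policy under a linear time penalty. -/
theorem threshold_policy_iterates_constant_first_difference
    (p q1 α β θ : ℝ) (hp0 : 0 < p) (hp2 : p < 1 / 2) (hq10 : 0 < q1) (hq11 : q1 ≤ 1)
    (V : ℕ → ℕ → ℝ)
    (hV0 : ∀ Δ, V 0 Δ = 0)
    (hVz : ∀ ν, V (ν + 1) 0 = β - θ + (1 - p) * V ν 0 + p * V ν 1)
    (hVp : ∀ ν Δ, 1 ≤ Δ → V (ν + 1) Δ = α * (Δ : ℝ) + β - θ +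
      ((1 - q1) * (1 - p) + q1 * p) * V ν (Δ + 1) +
      ((1 - q1) * p + q1 * (1 - p)) * V ν 0) :
    ∀ (ν : ℕ) (Δ1 Δ2 : ℕ), 1 ≤ Δ1 → 1 ≤ Δ2 →
      V ν (Δ1 + 1) - V ν Δ1 = V ν (Δ2 + 1) - V ν Δ2 := by
  intro ν
  induction ν with
  | zero => intro Δ1 Δ2 _ _; simp [hV0]
  | succ n ih =>
    intro Δ1 Δ2 h1 h2
    have e1 := hVp n Δ1 h1
    have e1' := hVp n (Δ1 + 1) (by omega)
    have e2 := hVp n Δ2 h2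
    have e2' := hVp n (Δ2 + 1) (by omega)
    have key := ih (Δ1 + 1) (Δ2 + 1) (by omega) (by omega)
    rw [e1, e1', e2, e2']
    push_cast
    linear_combination ((1 - q1) * (1 - p) + q1 * p) * key
end

section
/- Let p, q1, α, β, θ, σ be real numbers with 0 < p < 1/2 and 0 < q1 ≤ 1. Set c = (1 − q1)·(1 − p) + q1·p and c' = (1 − q1)·p + q1·(1 − p). Suppose V : ℕ → ℝ satisfies: (i) V(0) = β − θ + (1 − p)·V(0) + p·V(1); (ii) V(Δ) = α·Δ + β − θ + c·V(Δ+1) + c'·V(0) for every Δ ≥ 1; and (iii) V(Δ+1) − V(Δ) = σ for every Δ ≥ 1. Then V(1) − V(0) = (θ − β)/p and σ = α/(q1 + p − 2·q1·p). -/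
/-- Property 4 of the appendix lemma supporting Theorem 6: first difference at zero
and the constant first difference σ of the threshold preemptive policy's value function. -/
theorem threshold_policy_value_function_differences
    (p q1 α β θ σ : ℝ) (hp0 : 0 < p) (hp2 : p < 1 / 2) (hq10 : 0 < q1) (hq11 : q1 ≤ 1)
    (V : ℕ → ℝ)
    (h0 : V 0 = β - θ + (1 - p) * V 0 + p * V 1)
    (h1 : ∀ Δ : ℕ, 1 ≤ Δ → V Δ = α * (Δ : ℝ) + β - θ +
      ((1 - q1) * (1 - p) + q1 * p) * V (Δ + 1) +
      ((1 - q1) * p + q1 * (1 - p)) * V 0)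
    (h2 : ∀ Δ : ℕ, 1 ≤ Δ → V (Δ + 1) - V Δ = σ) :
    V 1 - V 0 = (θ - β) / p ∧ σ = α / (q1 + p - 2 * q1 * p) := by
  constructor
  · field_simp
    linarith
  · have e1 := h1 1 (le_refl 1)
    have e2 := h1 2 (by norm_num)
    have d1 := h2 1 (le_refl 1)
    have d2 := h2 2 (by norm_num)
    have hden : q1 + p - 2 * q1 * p > 0 := by nlinarith
    rw [eq_div_iff hden.ne']
    push_cast at e1 e2
    have d1' : V 2 - V 1 = σ := d1
    have d2' : V 3 - V 2 = σ := d2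
    linear_combination e2 - e1 - d1' + ((1 - q1) * (1 - p) + q1 * p) * d2'
end
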